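/- Under the setup, if E⁻ ∪ E⁺ is nonempty, then Ĝ is connected with vertex set V, G is connected, and |E(Ĝ)| − |V| = |E(G)| − |V(G)|; equivalently, the first Betti numbers of Ĝ and of G (number of edges minus number of vertices plus number of connected components) are equal. (Lemma 4.5 of the paper.) -/

import Mathlib

open SimpleGraph

set_option linter.unusedSectionVars false

section AuxWalk

variable {V : Type*} [DecidableEq V] {F : SimpleGraph V} {root : V → V}

lemma aux_path_unique (hF : F.IsAcyclic) {u w : V} {p q : F.Walk u w}
    (hp : p.IsPath) (hq : q.IsPath) : p = q :=
  congrArg Subtype.val (hF.path_unique ⟨p, hp⟩ ⟨q, hq⟩)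

variable {pathToRoot : (v : V) → F.Walk v (root v)}

lemma aux_len0 (hF : F.IsAcyclic) (hpath : ∀ v, (pathToRoot v).IsPath)
    {v : V} (hv : v = root v) : (pathToRoot v).length = 0 := by
  have h : (Walk.nil : F.Walk v v).copy rfl hv = pathToRoot v :=
    aux_path_unique hF (by simp) (hpath v)
  rw [← h]; simp

lemma aux_not_nil {v : V} (hv : v ≠ root v) : ¬ (pathToRoot v).Nil :=
  fun hn => hv (Walk.eq_of_length_eq_zero (Walk.nil_iff_length_eq.mp hn))

/-- the basic facts about the first step of the path to the root -/
lemma aux_step (hF : F.IsAcyclic)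
    (hrootConst : ∀ u v : V, F.Reachable u v → root u = root v)
    (hpath : ∀ v, (pathToRoot v).IsPath) {v : V} (hv : v ≠ root v) :
    F.Adj v ((pathToRoot v).getVert 1) ∧
      s(v, (pathToRoot v).getVert 1) ∈ (pathToRoot v).edges ∧
      (pathToRoot ((pathToRoot v).getVert 1)).length + 1 = (pathToRoot v).length := by
  have hn : ¬ (pathToRoot v).Nil := aux_not_nil hv
  have h1 : F.Adj v ((pathToRoot v).getVert 1) := Walk.adj_snd hn
  have hcons : Walk.cons ((pathToRoot v).adj_snd hn) (pathToRoot v).tail = pathToRoot v :=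
    Walk.cons_tail_eq _ hn
  refine ⟨h1, ?_, ?_⟩
  · rw [← hcons]; simp
  · have hr : root ((pathToRoot v).getVert 1) = root v :=
      hrootConst _ _ h1.symm.reachable
    have htp : (pathToRoot v).tail.IsPath := by
      have hp := hpath v
      rw [← hcons] at hp
      exact hp.of_cons
    have heq : (pathToRoot v).tail.copy rfl hr.symm = pathToRoot ((pathToRoot v).getVert 1) :=
      aux_path_unique hF (by simpa using htp) (hpath _)
    rw [← heq]
    simp only [Walk.length_copy]
    exact Walk.length_tail_add_one hn

/-- classification of an edge of `F` as the first step of one of its endpoints -/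
lemma aux_first_edge (hF : F.IsAcyclic)
    (hrootConst : ∀ u v : V, F.Reachable u v → root u = root v)
    (hpath : ∀ v, (pathToRoot v).IsPath) {a b : V} (hab : F.Adj a b) :
    (a ≠ root a ∧ (pathToRoot a).getVert 1 = b) ∨
      (b ≠ root b ∧ (pathToRoot b).getVert 1 = a) := by
  have hr : root a = root b := hrootConst a b hab.reachable
  by_cases h : a ∈ (pathToRoot b).support
  · right
    have hq : ((pathToRoot b).takeUntil a h).IsPath := (hpath b).takeUntil h
    have hsingle : (Walk.cons hab.symm Walk.nil : F.Walk b a).IsPath := by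
      simp [hab.ne']
    have hqe : (pathToRoot b).takeUntil a h = Walk.cons hab.symm Walk.nil :=
      aux_path_unique hF hq hsingle
    have hspec := (pathToRoot b).take_spec h
    rw [hqe] at hspec
    constructor
    · intro hbr
      have h0 := aux_len0 hF hpath hbr
      rw [← hspec] at h0
      simp at h0
    · rw [← hspec, Walk.cons_append, Walk.nil_append]
      exact Walk.snd_cons _ _
  · left
    have hconsp : (Walk.cons hab (pathToRoot b)).IsPath := (hpath b).cons h
    have heq : (Walk.cons hab (pathToRoot b)).copy rfl hr.symm = pathToRoot a :=
      aux_path_unique hF (by simpa using hconsp) (hpath a)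
    constructor
    · intro har
      have h0 := aux_len0 hF hpath har
      rw [← heq] at h0
      simp at h0
    · rw [← heq]
      simp [Walk.snd_cons]

/-- if `v` lies on the path from `u` to its root, the path from `v` is a suffix -/
lemma aux_suffix (hF : F.IsAcyclic)
    (hrootConst : ∀ u v : V, F.Reachable u v → root u = root v)
    (hpath : ∀ v, (pathToRoot v).IsPath) {u v : V} (hsup : v ∈ (pathToRoot u).support) :
    (pathToRoot v).edges ⊆ (pathToRoot u).edges := by
  have hr : root v = root u :=
    hrootConst v u (Reachable.symm ⟨(pathToRoot u).takeUntil v hsup⟩)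
  have heq : ((pathToRoot u).dropUntil v hsup).copy rfl hr.symm = pathToRoot v :=
    aux_path_unique hF (by simpa using (hpath u).dropUntil hsup) (hpath v)
  rw [← heq]
  simpa using (pathToRoot u).edges_dropUntil_subset hsup

/-- the counting lemma: a root-closed vertex set minus the roots is in bijection with
the corresponding edge set -/
lemma aux_count [Fintype V] (hF : F.IsAcyclic)
    (hrootReach : ∀ v : V, F.Reachable v (root v))
    (hrootConst : ∀ u v : V, F.Reachable u v → root u = root v)
    (hpath : ∀ v, (pathToRoot v).IsPath)
    (S : Set V) (E' : Set (Sym2 V))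
    (hE'F : E' ⊆ F.edgeSet)
    (hE'S : ∀ s ∈ E', ∀ x ∈ s, x ∈ S)
    (hSE' : ∀ v ∈ S, v ≠ root v → s(v, (pathToRoot v).getVert 1) ∈ E') :
    S.ncard = (S ∩ Set.range root).ncard + E'.ncard := by
  have hfix : ∀ v : V, v ∈ Set.range root ↔ root v = v := by
    intro v
    constructor
    · rintro ⟨u, rfl⟩
      exact (hrootConst u (root u) (hrootReach u)).symm
    · intro h; exact ⟨v, h⟩
  have himg : E' = (fun v => s(v, (pathToRoot v).getVert 1)) '' (S \ Set.range root) := by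
    ext e
    induction e using Sym2.ind with
    | _ a b =>
      constructor
      · intro he
        have hab : F.Adj a b := F.mem_edgeSet.mp (hE'F he)
        have haS : a ∈ S := hE'S _ he a (by simp)
        have hbS : b ∈ S := hE'S _ he b (by simp)
        rcases aux_first_edge hF hrootConst hpath hab with ⟨hne, hnx⟩ | ⟨hne, hnx⟩
        · exact ⟨a, ⟨haS, fun hr => hne ((hfix a).mp hr).symm⟩, by simp [hnx]⟩
        · exact ⟨b, ⟨hbS, fun hr => hne ((hfix b).mp hr).symm⟩,
            by simp [hnx, Sym2.eq_swap]⟩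
      · rintro ⟨v, ⟨hvS, hvr⟩, hveq⟩
        rw [← hveq]
        exact hSE' v hvS (fun h => hvr ((hfix v).mpr h.symm))
  have hinj : Set.InjOn (fun v => s(v, (pathToRoot v).getVert 1)) (S \ Set.range root) := by
    rintro a ⟨haS, har⟩ b ⟨hbS, hbr⟩ hfab
    have ha : a ≠ root a := fun h => har ((hfix a).mpr h.symm)
    have hb : b ≠ root b := fun h => hbr ((hfix b).mpr h.symm)
    have h1 := (aux_step hF hrootConst hpath ha).2.2
    have h2 := (aux_step hF hrootConst hpath hb).2.2
    rw [Sym2.eq_iff] at hfab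
    rcases hfab with ⟨h3, _⟩ | ⟨h3, h4⟩
    · exact h3
    · rw [h4] at h1
      rw [← h3] at h2
      omega
  have hcard1 : E'.ncard = (S \ Set.range root).ncard := by
    rw [himg]; exact Set.ncard_image_of_injOn hinj
  rw [hcard1]
  exact (Set.ncard_inter_add_ncard_diff_eq_ncard S (Set.range root)).symm

lemma aux_endpoint_mem {G : SimpleGraph V} {x y : V} (p : G.Walk x y) (hxy : x ≠ y) :
    ∃ e ∈ p.edges, x ∈ e := by
  cases p with
  | nil => exact absurd rfl hxy
  | @cons _ b _ h q => exact ⟨s(x, b), by simp, by simp⟩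

end AuxWalk

/-- Lemma 4.5: if E⁻ ∪ E⁺ is nonempty, then Ĝ is connected with vertex set V, G is connected, and |E(Ĝ)| − |V| = |E(G)| − |V(G)|, i.e. the first Betti numbers of Ĝ and of G agree. -/
theorem lemma_4_5_betti_numbers
    {V : Type*} [Fintype V] [DecidableEq V]
    -- `K` is a finite connected simple graph on vertex set `V`
    (K : SimpleGraph V) (hK : K.Connected)
    -- `F` is a spanning forest of `K` (an acyclic subgraph on all of `V`)
    (F : SimpleGraph V) (hFK : F ≤ K) (hFacyclic : F.IsAcyclic)
    -- a choice of root in each connected component of `F`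
    (root : V → V)
    (hrootReach : ∀ v : V, F.Reachable v (root v))
    (hrootConst : ∀ u v : V, F.Reachable u v → root u = root v)
    -- `pathToRoot v` is the unique path in `F` from `v` to the root of its component
    (pathToRoot : (v : V) → F.Walk v (root v))
    (hpathToRoot : ∀ v : V, (pathToRoot v).IsPath)
    -- `Eneg` and `Epos` are disjoint sets of edges of `K`, disjoint from the edges of `F`
    (Eneg Epos : Set (Sym2 V))
    (hEnegK : Eneg ⊆ K.edgeSet) (hEposK : Epos ⊆ K.edgeSet)
    (hdisjNP : Disjoint Eneg Epos)
    (hdisjNF : Disjoint Eneg F.edgeSet) (hdisjPF : Disjoint Epos F.edgeSet)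
    -- `That` (= T̂) is the spanning tree with edge set E(F) ∪ Eneg
    (That : SimpleGraph V)
    (hThatEdges : That.edgeSet = F.edgeSet ∪ Eneg)
    (hThatTree : That.IsTree)
    -- `GEdges` is the edge set of the output graph G: the union over e = (u,v) ∈ Eneg ∪ Epos
    -- of {e} ∪ path(u) ∪ path(v); `GVerts` is the set of vertices incident to an edge of G
    (GEdges : Set (Sym2 V))
    (hGEdges : GEdges = {s : Sym2 V | ∃ u v : V, s(u, v) ∈ Eneg ∪ Epos ∧
        (s = s(u, v) ∨ s ∈ (pathToRoot u).edges ∨ s ∈ (pathToRoot v).edges)})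
    (GVerts : Set V)
    (hGVerts : GVerts = {x : V | ∃ s ∈ GEdges, x ∈ s}) :
    (Eneg ∪ Epos).Nonempty →
      (SimpleGraph.fromEdgeSet (F.edgeSet ∪ Eneg ∪ Epos)).Connected ∧
      (GVerts.Nonempty ∧
        ∀ a ∈ GVerts, ∀ b ∈ GVerts, (SimpleGraph.fromEdgeSet GEdges).Reachable a b) ∧
      ((F.edgeSet ∪ Eneg ∪ Epos).ncard : ℤ) - (Fintype.card V : ℤ)
        = (GEdges.ncard : ℤ) - (GVerts.ncard : ℤ) := by
  intro hne
  set G' := SimpleGraph.fromEdgeSet GEdges with hG'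
  -- basic membership facts
  have hpathsub : ∀ u v : V, s(u, v) ∈ Eneg ∪ Epos →
      ∀ e ∈ (pathToRoot u).edges, e ∈ GEdges := by
    intro u v h e he
    rw [hGEdges]
    exact ⟨u, v, h, Or.inr (Or.inl he)⟩
  have hEsubG : Eneg ∪ Epos ⊆ GEdges := by
    intro s hs
    induction s using Sym2.ind with
    | _ a b =>
      rw [hGEdges]
      exact ⟨a, b, hs, Or.inl rfl⟩
  have hGsub : GEdges ⊆ (Eneg ∪ Epos) ∪ F.edgeSet := by
    intro s hs
    rw [hGEdges] at hs
    obtain ⟨u, v, hm, hc⟩ := hs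
    rcases hc with rfl | hc | hc
    · exact Or.inl hm
    · exact Or.inr ((pathToRoot u).edges_subset_edgeSet hc)
    · exact Or.inr ((pathToRoot v).edges_subset_edgeSet hc)
  -- every vertex of G has its whole path-to-root inside G
  have hL : ∀ v ∈ GVerts, ∀ e ∈ (pathToRoot v).edges, e ∈ GEdges := by
    intro v hv
    rw [hGVerts] at hv
    obtain ⟨s, hsG, hvs⟩ := hv
    have hsG' := hsG
    rw [hGEdges] at hsG'
    obtain ⟨u, w, hm, hc⟩ := hsG'
    rcases hc with rfl | hc | hc
    · rcases Sym2.mem_iff.mp hvs with rfl | rfl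
      · exact hpathsub _ _ hm
      · intro e he
        rw [hGEdges]
        exact ⟨u, v, hm, Or.inr (Or.inr he)⟩
    · have hvsup : v ∈ (pathToRoot u).support := by
        induction s using Sym2.ind with
        | _ x y =>
          rcases Sym2.mem_iff.mp hvs with rfl | rfl
          · exact (pathToRoot u).fst_mem_support_of_mem_edges hc
          · exact (pathToRoot u).snd_mem_support_of_mem_edges hc
      exact fun e he =>
        hpathsub _ _ hm e (aux_suffix hFacyclic hrootConst hpathToRoot hvsup he)
    · have hvsup : v ∈ (pathToRoot w).support := by
        induction s using Sym2.ind with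
        | _ x y =>
          rcases Sym2.mem_iff.mp hvs with rfl | rfl
          · exact (pathToRoot w).fst_mem_support_of_mem_edges hc
          · exact (pathToRoot w).snd_mem_support_of_mem_edges hc
      intro e he
      rw [hGEdges]
      exact ⟨u, w, hm,
        Or.inr (Or.inr (aux_suffix hFacyclic hrootConst hpathToRoot hvsup he))⟩
  -- transfer of path to root into G'
  have hreach : ∀ v ∈ GVerts, G'.Reachable v (root v) := by
    intro v hv
    have hedges : ∀ e ∈ (pathToRoot v).edges, e ∈ G'.edgeSet := by
      intro e he
      rw [hG', edgeSet_fromEdgeSet]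
      refine ⟨hL v hv e he, ?_⟩
      exact F.not_isDiag_of_mem_edgeSet ((pathToRoot v).edges_subset_edgeSet he)
    exact ⟨(pathToRoot v).transfer G' hedges⟩
  -- the root of a vertex of G is a vertex of G
  have hGVroot : ∀ v ∈ GVerts, root v ∈ GVerts := by
    intro v hv
    by_cases h : v = root v
    · rwa [← h]
    · have hroot_ne : root v ≠ v := fun e => h e.symm
      obtain ⟨e, hee, hme⟩ := aux_endpoint_mem (pathToRoot v).reverse hroot_ne
      have heG : e ∈ GEdges := by
        apply hL v hv
        rwa [Walk.edges_reverse, List.mem_reverse] at hee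
      rw [hGVerts]
      exact ⟨e, heG, hme⟩
  -- roots of any two vertices are joined in G'
  have hroots : ∀ a b : V, G'.Reachable (root a) (root b) := by
    have key : ∀ {a b : V}, That.Walk a b → G'.Reachable (root a) (root b) := by
      intro a b w
      induction w with
      | nil => exact Reachable.refl _
      | @cons x y z h q ih =>
        have he : s(x, y) ∈ F.edgeSet ∪ Eneg := by
          rw [← hThatEdges]; exact h
        rcases he with hF' | hN
        · have hxy : root x = root y := hrootConst x y (F.mem_edgeSet.mp hF').reachable
          rw [hxy]; exact ih
        · have hmem : s(x, y) ∈ Eneg ∪ Epos := Or.inl hN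
          have hGxy : s(x, y) ∈ GEdges := hEsubG hmem
          have hxV : x ∈ GVerts := by rw [hGVerts]; exact ⟨_, hGxy, by simp⟩
          have hyV : y ∈ GVerts := by rw [hGVerts]; exact ⟨_, hGxy, by simp⟩
          have hadj : G'.Adj x y := (fromEdgeSet_adj _).mpr ⟨hGxy, h.ne⟩
          exact ((hreach x hxV).symm.trans (hadj.reachable.trans (hreach y hyV))).trans ih
    intro a b
    exact key ((hThatTree.isConnected.preconnected a b).some)
  -- G nonempty
  obtain ⟨e₀, he₀⟩ := hne
  have hx₀ : ∃ x₀, x₀ ∈ GVerts := by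
    induction e₀ using Sym2.ind with
    | _ a b =>
      refine ⟨a, ?_⟩
      rw [hGVerts]
      exact ⟨s(a, b), hEsubG he₀, by simp⟩
  obtain ⟨x₀, hx₀⟩ := hx₀
  -- every root is a vertex of G
  have hrootG : Set.range root ⊆ GVerts := by
    have key : ∀ {a b : V}, That.Walk a b → root a ∈ GVerts → root b ∈ GVerts := by
      intro a b w
      induction w with
      | nil => exact id
      | @cons x y z h q ih =>
        intro hx
        have he : s(x, y) ∈ F.edgeSet ∪ Eneg := by
          rw [← hThatEdges]; exact h
        rcases he with hF' | hN
        · have hxy : root x = root y := hrootConst x y (F.mem_edgeSet.mp hF').reachable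
          rw [hxy] at hx; exact ih hx
        · have hGxy : s(x, y) ∈ GEdges := hEsubG (Or.inl hN)
          have hyV : y ∈ GVerts := by rw [hGVerts]; exact ⟨_, hGxy, by simp⟩
          exact ih (hGVroot y hyV)
    rintro r ⟨w, rfl⟩
    exact key ((hThatTree.isConnected.preconnected x₀ w).some) (hGVroot x₀ hx₀)
  refine ⟨?_, ⟨⟨x₀, hx₀⟩, ?_⟩, ?_⟩
  -- Ghat connected
  · have hThatLe : That ≤ SimpleGraph.fromEdgeSet (F.edgeSet ∪ Eneg ∪ Epos) := by
      intro x y hxy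
      rw [fromEdgeSet_adj]
      refine ⟨?_, hxy.ne⟩
      have hx : s(x, y) ∈ That.edgeSet := hxy
      rw [hThatEdges] at hx
      rcases hx with h | h
      · exact Or.inl (Or.inl h)
      · exact Or.inl (Or.inr h)
    exact hThatTree.isConnected.mono hThatLe
  -- G connected
  · intro a ha b hb
    exact (hreach a ha).trans ((hroots a b).trans (hreach b hb).symm)
  -- counting
  · have hdisjEF : Disjoint (Eneg ∪ Epos) F.edgeSet :=
      Set.disjoint_union_left.mpr ⟨hdisjNF, hdisjPF⟩
    have hsplit : GEdges = (Eneg ∪ Epos) ∪ (GEdges ∩ F.edgeSet) := by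
      apply Set.eq_of_subset_of_subset
      · intro s hs
        rcases hGsub hs with h | h
        · exact Or.inl h
        · exact Or.inr ⟨hs, h⟩
      · exact Set.union_subset hEsubG Set.inter_subset_left
    have hdisj1 : Disjoint (Eneg ∪ Epos) (GEdges ∩ F.edgeSet) :=
      hdisjEF.mono_right Set.inter_subset_right
    have e2 : GEdges.ncard = Eneg.ncard + Epos.ncard + (GEdges ∩ F.edgeSet).ncard := by
      conv_lhs => rw [hsplit]
      rw [Set.ncard_union_eq hdisj1, Set.ncard_union_eq hdisjNP]
    have e1 : (F.edgeSet ∪ Eneg ∪ Epos).ncard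
        = F.edgeSet.ncard + Eneg.ncard + Epos.ncard := by
      have hd2 : Disjoint (F.edgeSet ∪ Eneg) Epos := by
        apply Set.disjoint_union_left.mpr
        exact ⟨hdisjPF.symm, hdisjNP⟩
      rw [Set.ncard_union_eq hd2, Set.ncard_union_eq hdisjNF.symm]
    have count1 : (Set.univ : Set V).ncard
        = ((Set.univ : Set V) ∩ Set.range root).ncard + F.edgeSet.ncard := by
      apply aux_count hFacyclic hrootReach hrootConst hpathToRoot
      · exact le_refl _
      · intro s _ x _; trivial
      · intro v _ hv
        exact F.mem_edgeSet.mpr (aux_step hFacyclic hrootConst hpathToRoot hv).1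
    have count2 : GVerts.ncard
        = (GVerts ∩ Set.range root).ncard + (GEdges ∩ F.edgeSet).ncard := by
      apply aux_count hFacyclic hrootReach hrootConst hpathToRoot
      · exact Set.inter_subset_right
      · intro s hs x hx
        rw [hGVerts]
        exact ⟨s, hs.1, hx⟩
      · intro v hv hvr
        refine ⟨hL v hv _ ((aux_step hFacyclic hrootConst hpathToRoot hvr).2.1), ?_⟩
        exact F.mem_edgeSet.mpr (aux_step hFacyclic hrootConst hpathToRoot hvr).1
    rw [Set.univ_inter] at count1
    rw [Set.inter_eq_self_of_subset_right hrootG] at count2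
    have hcardV : Fintype.card V = (Set.univ : Set V).ncard := by
      rw [Set.ncard_univ, Nat.card_eq_fintype_card]
    rw [hcardV]
    omega
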